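/- Let μ1, μ2, μ3 > 0, ρ > 0 and 0 < r2 < 1 be real numbers. Define g : (0,∞)⁴ → ℝ by g(w, x, x', y) = 1[w ≤ ρ]·(1[x ≥ ρ] + 1[x < ρ]·1[x' > x])·r2·(x' + y). Then the 4-fold Lebesgue integral ∫₀^∞∫₀^∞∫₀^∞∫₀^∞ g(w, x, x', y)·(1/μ1)·exp(−w/μ1)·(1/μ1)·exp(−x/μ1)·(1/μ2)·exp(−x'/μ2)·(1/μ3)·exp(−y/μ3) dw dx dx' dy equals r2·(1 − exp(−ρ/μ1))·( exp(−ρ/μ1)·μ2 + μ2 + (ρ·μ1/(μ1+μ2))·exp(−ρ(μ1+μ2)/(μ1·μ2)) + (μ1²·μ2/(μ1+μ2)²)·exp(−ρ(μ1+μ2)/(μ1·μ2)) − μ1²·μ2/(μ1+μ2)² − ρ·exp(−ρ(μ1+μ2)/(μ1·μ2)) − μ2·exp(−ρ(μ1+μ2)/(μ1·μ2)) ) + r2·μ3·(1 − exp(−ρ/μ1))·( exp(−ρ/μ1) + 1 + (μ1/(μ1+μ2))·exp(−ρ(μ1+μ2)/(μ1·μ2)) − μ1/(μ1+μ2) − exp(−ρ/μ1)·exp(−ρ/μ2)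 ). (This is the expected per-round reward E[V_secondary] of the secondary (default) builder.) -/

import Mathlib

open MeasureTheory

namespace FB
open Set Filter

lemma tendsto_exp_neg {a : ℝ} (ha : 0 < a) :
    Tendsto (fun x : ℝ => Real.exp (-a * x)) atTop (nhds 0) :=
  Real.tendsto_exp_atBot.comp (tendsto_id.const_mul_atTop_of_neg (neg_neg_iff_pos.2 ha))

lemma tendsto_xexp {a : ℝ} (ha : 0 < a) :
    Tendsto (fun x : ℝ => x * Real.exp (-a * x)) atTop (nhds 0) := by
  have h1 : Tendsto (fun x : ℝ => a * x) atTop atTop :=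
    Tendsto.const_mul_atTop ha tendsto_id
  have h2 := (Real.tendsto_pow_mul_exp_neg_atTop_nhds_zero 1).comp h1
  have h3 := h2.const_mul (1 / a)
  rw [mul_zero] at h3
  refine h3.congr fun x => ?_
  simp only [Function.comp, pow_one]
  field_simp

lemma hasDerivAt1 {a : ℝ} (ha : a ≠ 0) (x : ℝ) :
    HasDerivAt (fun x : ℝ => -(Real.exp (-a * x) / a)) (Real.exp (-a * x)) x := by
  have h : HasDerivAt (fun x : ℝ => -a * x) (-a) x := by
    simpa using (hasDerivAt_id x).const_mul (-a)
  have := (h.exp.div_const a).neg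
  refine this.congr_deriv ?_
  field_simp

lemma hasDerivAt2 {a : ℝ} (ha : a ≠ 0) (x : ℝ) :
    HasDerivAt (fun x : ℝ => -((x / a + 1 / a ^ 2) * Real.exp (-a * x)))
      (x * Real.exp (-a * x)) x := by
  have h : HasDerivAt (fun x : ℝ => -a * x) (-a) x := by
    simpa using (hasDerivAt_id x).const_mul (-a)
  have h1 : HasDerivAt (fun x : ℝ => x / a + 1 / a ^ 2) (1 / a) x :=
    ((hasDerivAt_id x).div_const a).add_const _
  have := (h1.mul h.exp).neg
  refine this.congr_deriv ?_
  field_simp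
  ring

lemma int1 {a : ℝ} (ha : 0 < a) (c : ℝ) :
    IntegrableOn (fun x : ℝ => Real.exp (-a * x)) (Ioi c) :=
  exp_neg_integrableOn_Ioi c ha

lemma tail1 {a : ℝ} (ha : 0 < a) (c : ℝ) :
    ∫ x in Ioi c, Real.exp (-a * x) = Real.exp (-a * c) / a := by
  have ht : Tendsto (fun x : ℝ => -(Real.exp (-a * x) / a)) atTop (nhds 0) := by
    have := ((tendsto_exp_neg ha).div_const a).neg
    simpa using this
  rw [integral_Ioi_of_hasDerivAt_of_tendsto' (fun x _ => hasDerivAt1 ha.ne' x) (int1 ha c) ht]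
  ring

lemma tend2 {a : ℝ} (ha : 0 < a) :
    Tendsto (fun x : ℝ => -((x / a + 1 / a ^ 2) * Real.exp (-a * x))) atTop (nhds 0) := by
  have h1 := (tendsto_xexp ha).div_const a
  have h2 := (tendsto_exp_neg ha).const_mul (1 / a ^ 2)
  have h3 := (h1.add h2).neg
  simp only [zero_div, mul_zero, add_zero, neg_zero, zero_add] at h3
  exact h3.congr fun x => by ring

lemma int2 {a : ℝ} (ha : 0 < a) {c : ℝ} (hc : 0 ≤ c) :
    IntegrableOn (fun x : ℝ => x * Real.exp (-a * x)) (Ioi c) :=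
  integrableOn_Ioi_deriv_of_nonneg' (fun x _ => hasDerivAt2 ha.ne' x)
    (fun x hx => mul_nonneg (hc.trans hx.le) (Real.exp_pos _).le) (tend2 ha)

lemma tail2 {a : ℝ} (ha : 0 < a) {c : ℝ} (hc : 0 ≤ c) :
    ∫ x in Ioi c, x * Real.exp (-a * x) = (c / a + 1 / a ^ 2) * Real.exp (-a * c) := by
  rw [integral_Ioi_of_hasDerivAt_of_tendsto' (fun x _ => hasDerivAt2 ha.ne' x) (int2 ha hc)
    (tend2 ha)]
  ring

lemma split {f : ℝ → ℝ} {ρ : ℝ} (hρ : 0 ≤ ρ) (hf : IntegrableOn f (Ioi 0)) :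
    ∫ x in Ioc 0 ρ, f x = (∫ x in Ioi 0, f x) - ∫ x in Ioi ρ, f x := by
  have h2 := setIntegral_union (μ := volume) (f := f) (Ioc_disjoint_Ioi le_rfl)
    measurableSet_Ioi (hf.mono_set Ioc_subset_Ioi_self) (hf.mono_set (Ioi_subset_Ioi hρ))
  rw [Ioc_union_Ioi_eq_Ioi hρ] at h2
  linarith

lemma split' {f : ℝ → ℝ} {ρ : ℝ} (hρ : 0 ≤ ρ) (hf : IntegrableOn f (Ioi 0)) :
    ∫ x in Ioi 0, f x = (∫ x in Ioc 0 ρ, f x) + ∫ x in Ioi ρ, f x := by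
  rw [split hρ hf]; ring

lemma intlin {b : ℝ} (hb : 0 < b) (y : ℝ) {c : ℝ} (hc : 0 ≤ c) :
    IntegrableOn (fun x : ℝ => (x + y) * Real.exp (-b * x)) (Ioi c) := by
  have h := (int2 hb hc).add ((int1 hb c).const_mul y)
  exact h.congr (Filter.Eventually.of_forall fun x => by simp only [Pi.add_apply]; ring)

lemma linexp_Ioi {b : ℝ} (hb : 0 < b) (y : ℝ) {c : ℝ} (hc : 0 ≤ c) :
    ∫ x in Ioi c, (x + y) * Real.exp (-b * x)
      = (c / b + 1 / b ^ 2 + y / b) * Real.exp (-b * c) := by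
  have h : ∀ x : ℝ, (x + y) * Real.exp (-b * x)
      = x * Real.exp (-b * x) + y * Real.exp (-b * x) := fun x => by ring
  simp only [h]
  rw [integral_add (int2 hb hc) ((int1 hb c).const_mul y), integral_const_mul,
    tail1 hb, tail2 hb hc]
  ring

lemma linexp_Ioc {b : ℝ} (hb : 0 < b) (y : ℝ) {ρ : ℝ} (hρ : 0 ≤ ρ) :
    ∫ x in Ioc (0:ℝ) ρ, (x + y) * Real.exp (-b * x)
      = (1 / b ^ 2 + y / b) - (ρ / b + 1 / b ^ 2 + y / b) * Real.exp (-b * ρ) := by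
  rw [split hρ (intlin hb y le_rfl), linexp_Ioi hb y le_rfl, linexp_Ioi hb y hρ,
    show -b * (0:ℝ) = 0 by ring, Real.exp_zero]
  ring

lemma ind_le {a : ℝ} (ha : 0 < a) {ρ : ℝ} (hρ : 0 ≤ ρ) :
    ∫ x in Ioi (0:ℝ), (if x ≤ ρ then (1:ℝ) else 0) * Real.exp (-a * x)
      = (1 - Real.exp (-a * ρ)) / a := by
  have h : ∀ x : ℝ, (if x ≤ ρ then (1:ℝ) else 0) * Real.exp (-a * x)
      = (Iic ρ).indicator (fun x => Real.exp (-a * x)) x := by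
    intro x; by_cases hx : x ≤ ρ <;> simp [indicator, hx]
  simp only [h]
  rw [setIntegral_indicator measurableSet_Iic, Ioi_inter_Iic,
    split hρ (int1 ha 0), tail1 ha 0, tail1 ha ρ,
    show -a * (0:ℝ) = 0 by ring, Real.exp_zero]
  ring

lemma ind_ge {a : ℝ} (ha : 0 < a) {ρ : ℝ} (hρ : 0 < ρ) :
    ∫ x in Ioi (0:ℝ), (if x ≥ ρ then (1:ℝ) else 0) * Real.exp (-a * x)
      = Real.exp (-a * ρ) / a := by
  have h : ∀ x : ℝ, (if x ≥ ρ then (1:ℝ) else 0) * Real.exp (-a * x)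
      = (Ici ρ).indicator (fun x => Real.exp (-a * x)) x := by
    intro x; by_cases hx : ρ ≤ x <;> simp [indicator, hx]
  simp only [h]
  rw [setIntegral_indicator measurableSet_Ici]
  have he : Ioi (0:ℝ) ∩ Ici ρ = Ici ρ :=
    inter_eq_self_of_subset_right fun x hx => lt_of_lt_of_le hρ hx
  rw [he, integral_Ici_eq_integral_Ioi, tail1 ha ρ]

lemma ind_min {a : ℝ} (ha : 0 < a) {ρ x' : ℝ} (hρ : 0 < ρ) (hx' : 0 < x') :
    ∫ x in Ioi (0:ℝ),
      ((if x < ρ then (1:ℝ) else 0) * (if x' > x then (1:ℝ) else 0)) * Real.exp (-a * x)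
      = (1 - Real.exp (-a * min ρ x')) / a := by
  have h : ∀ x : ℝ,
      ((if x < ρ then (1:ℝ) else 0) * (if x' > x then (1:ℝ) else 0)) * Real.exp (-a * x)
      = (Iio (min ρ x')).indicator (fun x => Real.exp (-a * x)) x := by
    intro x
    by_cases h1 : x < ρ <;> by_cases h2 : x < x' <;>
      simp [indicator, h1, h2, lt_min_iff, gt_iff_lt]
  simp only [h]
  rw [setIntegral_indicator measurableSet_Iio, Ioi_inter_Iio, ← integral_Ioc_eq_integral_Ioo,
    split (le_of_lt (lt_min hρ hx')) (int1 ha 0), tail1 ha 0, tail1 ha _,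
    show -a * (0:ℝ) = 0 by ring, Real.exp_zero]
  ring

lemma affine_Ioi {c : ℝ} (hc : 0 < c) (α β : ℝ) :
    ∫ y in Ioi (0:ℝ), (α + β * y) * Real.exp (-c * y) = α / c + β / c ^ 2 := by
  have h : ∀ y : ℝ, (α + β * y) * Real.exp (-c * y)
      = β * (y * Real.exp (-c * y)) + α * Real.exp (-c * y) := fun y => by ring
  simp only [h]
  rw [integral_add ((int2 hc le_rfl).const_mul β) ((int1 hc 0).const_mul α),
    integral_const_mul, integral_const_mul, tail1 hc 0, tail2 hc le_rfl,
    show -c * (0:ℝ) = 0 by ring, Real.exp_zero]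
  ring

lemma int_ind_ge {a ρ : ℝ} (ha : 0 < a) :
    IntegrableOn (fun x : ℝ => (if x ≥ ρ then (1:ℝ) else 0) * Real.exp (-a * x)) (Ioi 0) := by
  have h := (int1 ha 0).indicator (measurableSet_Ici (a := ρ))
  refine h.congr_fun (fun x _ => ?_) measurableSet_Ioi
  by_cases hx : ρ ≤ x <;> simp [indicator, hx]

lemma int_ind_min {a ρ x' : ℝ} (ha : 0 < a) :
    IntegrableOn (fun x : ℝ =>
      ((if x < ρ then (1:ℝ) else 0) * (if x' > x then (1:ℝ) else 0)) * Real.exp (-a * x))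
      (Ioi 0) := by
  have h := (int1 ha 0).indicator (measurableSet_Iio (a := min ρ x'))
  refine h.congr_fun (fun x _ => ?_) measurableSet_Ioi
  by_cases h1 : x < ρ <;> by_cases h2 : x < x' <;>
    simp [indicator, h1, h2, lt_min_iff, gt_iff_lt]

end FB

set_option maxHeartbeats 2000000

/-- Proposition 4 (secondary builder reward): the expectation of the secondary
(default) builder's per-round reward, written as a 4-fold Lebesgue integral
against the product of exponential densities (with means `μ1, μ1, μ2, μ3` for
`W, X, X', Y` respectively), equals the stated closed form. -/
theorem flashback_secondary_builder_reward
    (μ1 μ2 μ3 ρ r2 : ℝ) (hμ1 : 0 < μ1) (hμ2 : 0 < μ2) (hμ3 : 0 < μ3)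
    (hρ : 0 < ρ) (hr2_pos : 0 < r2) (hr2_lt : r2 < 1) :
    (∫ y in Set.Ioi (0:ℝ), ∫ x' in Set.Ioi (0:ℝ), ∫ x in Set.Ioi (0:ℝ),
      ∫ w in Set.Ioi (0:ℝ),
        ((if w ≤ ρ then (1:ℝ) else 0) *
            ((if x ≥ ρ then (1:ℝ) else 0)
              + (if x < ρ then (1:ℝ) else 0) * (if x' > x then (1:ℝ) else 0)) *
            (r2 * (x' + y))) *
        ((1 / μ1) * Real.exp (-w / μ1)) * ((1 / μ1) * Real.exp (-x / μ1)) *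
        ((1 / μ2) * Real.exp (-x' / μ2)) * ((1 / μ3) * Real.exp (-y / μ3)))
    = r2 * (1 - Real.exp (-ρ / μ1)) *
        (Real.exp (-ρ / μ1) * μ2 + μ2
          + (ρ * μ1 / (μ1 + μ2)) * Real.exp (-ρ * (μ1 + μ2) / (μ1 * μ2))
          + (μ1 ^ 2 * μ2 / (μ1 + μ2) ^ 2) * Real.exp (-ρ * (μ1 + μ2) / (μ1 * μ2))
          - μ1 ^ 2 * μ2 / (μ1 + μ2) ^ 2
          - ρ * Real.exp (-ρ * (μ1 + μ2) / (μ1 * μ2))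
          - μ2 * Real.exp (-ρ * (μ1 + μ2) / (μ1 * μ2)))
      + r2 * μ3 * (1 - Real.exp (-ρ / μ1)) *
          (Real.exp (-ρ / μ1) + 1
            + (μ1 / (μ1 + μ2)) * Real.exp (-ρ * (μ1 + μ2) / (μ1 * μ2))
            - μ1 / (μ1 + μ2)
            - Real.exp (-ρ / μ1) * Real.exp (-ρ / μ2)) := by
  have ha1 : (0:ℝ) < 1/μ1 := by positivity
  have ha2 : (0:ℝ) < 1/μ2 := by positivity
  have ha3 : (0:ℝ) < 1/μ3 := by positivity
  have hab : (0:ℝ) < 1/μ1 + 1/μ2 := by positivity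
  have h12 : (0:ℝ) < μ1 + μ2 := by positivity
  -- Step 1: the innermost (w) integral
  have hw : ∀ x x' y : ℝ,
      (∫ w in Set.Ioi (0:ℝ),
        ((if w ≤ ρ then (1:ℝ) else 0) *
            ((if x ≥ ρ then (1:ℝ) else 0)
              + (if x < ρ then (1:ℝ) else 0) * (if x' > x then (1:ℝ) else 0)) *
            (r2 * (x' + y))) *
        ((1 / μ1) * Real.exp (-w / μ1)) * ((1 / μ1) * Real.exp (-x / μ1)) *
        ((1 / μ2) * Real.exp (-x' / μ2)) * ((1 / μ3) * Real.exp (-y / μ3)))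
      = (1 - Real.exp (-(1/μ1) * ρ)) *
          (((if x ≥ ρ then (1:ℝ) else 0)
              + (if x < ρ then (1:ℝ) else 0) * (if x' > x then (1:ℝ) else 0)) *
            (r2 * (x' + y)) * ((1 / μ1) * Real.exp (-x / μ1)) *
            ((1 / μ2) * Real.exp (-x' / μ2)) * ((1 / μ3) * Real.exp (-y / μ3))) := by
    intro x x' y
    have hp : ∀ w : ℝ,
        ((if w ≤ ρ then (1:ℝ) else 0) *
            ((if x ≥ ρ then (1:ℝ) else 0)
              + (if x < ρ then (1:ℝ) else 0) * (if x' > x then (1:ℝ) else 0)) *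
            (r2 * (x' + y))) *
        ((1 / μ1) * Real.exp (-w / μ1)) * ((1 / μ1) * Real.exp (-x / μ1)) *
        ((1 / μ2) * Real.exp (-x' / μ2)) * ((1 / μ3) * Real.exp (-y / μ3))
        = (((if x ≥ ρ then (1:ℝ) else 0)
              + (if x < ρ then (1:ℝ) else 0) * (if x' > x then (1:ℝ) else 0)) *
            (r2 * (x' + y)) * (1/μ1) * ((1 / μ1) * Real.exp (-x / μ1)) *
            ((1 / μ2) * Real.exp (-x' / μ2)) * ((1 / μ3) * Real.exp (-y / μ3))) *
          ((if w ≤ ρ then (1:ℝ) else 0) * Real.exp (-(1/μ1) * w)) := by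
      intro w
      rw [show -w/μ1 = -(1/μ1)*w by ring]
      ring
    simp only [hp]
    rw [MeasureTheory.integral_const_mul, FB.ind_le ha1 hρ.le]
    field_simp
  -- Step 2: the x integral
  have hx : ∀ x' y : ℝ, 0 < x' →
      (∫ x in Set.Ioi (0:ℝ),
        (1 - Real.exp (-(1/μ1) * ρ)) *
          (((if x ≥ ρ then (1:ℝ) else 0)
              + (if x < ρ then (1:ℝ) else 0) * (if x' > x then (1:ℝ) else 0)) *
            (r2 * (x' + y)) * ((1 / μ1) * Real.exp (-x / μ1)) *
            ((1 / μ2) * Real.exp (-x' / μ2)) * ((1 / μ3) * Real.exp (-y / μ3))))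
      = (1 - Real.exp (-(1/μ1) * ρ)) *
          ((Real.exp (-(1/μ1) * ρ) + 1 - Real.exp (-(1/μ1) * min ρ x')) *
            (r2 * (x' + y)) * ((1 / μ2) * Real.exp (-x' / μ2)) *
            ((1 / μ3) * Real.exp (-y / μ3))) := by
    intro x' y hx'
    have hp : ∀ x : ℝ,
        (1 - Real.exp (-(1/μ1) * ρ)) *
          (((if x ≥ ρ then (1:ℝ) else 0)
              + (if x < ρ then (1:ℝ) else 0) * (if x' > x then (1:ℝ) else 0)) *
            (r2 * (x' + y)) * ((1 / μ1) * Real.exp (-x / μ1)) *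
            ((1 / μ2) * Real.exp (-x' / μ2)) * ((1 / μ3) * Real.exp (-y / μ3)))
        = ((1 - Real.exp (-(1/μ1) * ρ)) * (r2 * (x' + y)) * (1/μ1) *
            ((1 / μ2) * Real.exp (-x' / μ2)) * ((1 / μ3) * Real.exp (-y / μ3))) *
          ((if x ≥ ρ then (1:ℝ) else 0) * Real.exp (-(1/μ1) * x)
            + ((if x < ρ then (1:ℝ) else 0) * (if x' > x then (1:ℝ) else 0)) *
                Real.exp (-(1/μ1) * x)) := by
      intro x
      rw [show -x/μ1 = -(1/μ1)*x by ring]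
      ring
    simp only [hp]
    rw [MeasureTheory.integral_const_mul,
      MeasureTheory.integral_add (FB.int_ind_ge ha1) (FB.int_ind_min ha1),
      FB.ind_ge ha1 hρ, FB.ind_min ha1 hρ hx']
    field_simp
    ring
  -- Step 3: reduce to a double integral
  refine Eq.trans (setIntegral_congr_fun (g := fun y => ∫ x' in Set.Ioi (0:ℝ),
      (1 - Real.exp (-(1/μ1) * ρ)) *
        ((Real.exp (-(1/μ1) * ρ) + 1 - Real.exp (-(1/μ1) * min ρ x')) *
          (r2 * (x' + y)) * ((1 / μ2) * Real.exp (-x' / μ2)) *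
          ((1 / μ3) * Real.exp (-y / μ3)))) measurableSet_Ioi (fun y _ => ?_)) ?_
  · refine setIntegral_congr_fun measurableSet_Ioi fun x' hm => ?_
    simp only [hw]
    exact hx x' y hm
  -- Step 4: the x' integral
  have h4 : ∀ y : ℝ,
      (∫ x' in Set.Ioi (0:ℝ),
        (1 - Real.exp (-(1/μ1) * ρ)) *
          ((Real.exp (-(1/μ1) * ρ) + 1 - Real.exp (-(1/μ1) * min ρ x')) *
            (r2 * (x' + y)) * ((1 / μ2) * Real.exp (-x' / μ2)) *
            ((1 / μ3) * Real.exp (-y / μ3))))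
      = (((1 - Real.exp (-(1/μ1) * ρ)) * r2 * (1/μ2) * (1/μ3) *
            ((Real.exp (-(1/μ1) * ρ) + 1) * (1/(1/μ2)^2)
              - (Real.exp (-(1/μ1) * ρ) + 1) * (ρ/(1/μ2) + 1/(1/μ2)^2) * Real.exp (-(1/μ2) * ρ)
              - 1/(1/μ1+1/μ2)^2
              + (ρ/(1/μ1+1/μ2) + 1/(1/μ1+1/μ2)^2) * Real.exp (-(1/μ1+1/μ2) * ρ)
              + (ρ/(1/μ2) + 1/(1/μ2)^2) * Real.exp (-(1/μ2) * ρ)))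
          + ((1 - Real.exp (-(1/μ1) * ρ)) * r2 * (1/μ2) * (1/μ3) *
            ((Real.exp (-(1/μ1) * ρ) + 1) * (1/(1/μ2))
              - (Real.exp (-(1/μ1) * ρ) + 1) * (1/(1/μ2)) * Real.exp (-(1/μ2) * ρ)
              - 1/(1/μ1+1/μ2)
              + (1/(1/μ1+1/μ2)) * Real.exp (-(1/μ1+1/μ2) * ρ)
              + (1/(1/μ2)) * Real.exp (-(1/μ2) * ρ))) * y)
          * Real.exp (-(1/μ3) * y) := by
    intro y
    have hp : ∀ x' : ℝ,
        (1 - Real.exp (-(1/μ1) * ρ)) *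
          ((Real.exp (-(1/μ1) * ρ) + 1 - Real.exp (-(1/μ1) * min ρ x')) *
            (r2 * (x' + y)) * ((1 / μ2) * Real.exp (-x' / μ2)) *
            ((1 / μ3) * Real.exp (-y / μ3)))
        = ((1 - Real.exp (-(1/μ1) * ρ)) * r2 * (1/μ2) *
            ((1/μ3) * Real.exp (-(1/μ3) * y))) *
          ((Real.exp (-(1/μ1) * ρ) + 1 - Real.exp (-(1/μ1) * min ρ x')) *
            ((x' + y) * Real.exp (-(1/μ2) * x'))) := by
      intro x'
      rw [show -x'/μ2 = -(1/μ2)*x' by ring, show -y/μ3 = -(1/μ3)*y by ring]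
      ring
    simp only [hp]
    rw [MeasureTheory.integral_const_mul]
    have contf : Continuous fun x' : ℝ =>
        (Real.exp (-(1/μ1) * ρ) + 1 - Real.exp (-(1/μ1) * min ρ x')) *
          ((x' + y) * Real.exp (-(1/μ2) * x')) := by fun_prop
    have intf : IntegrableOn (fun x' : ℝ =>
        (Real.exp (-(1/μ1) * ρ) + 1 - Real.exp (-(1/μ1) * min ρ x')) *
          ((x' + y) * Real.exp (-(1/μ2) * x'))) (Set.Ioi 0) := by
      refine Integrable.mono' ((FB.intlin ha2 |y| le_rfl).const_mul 2)
        contf.aestronglyMeasurable.restrict ?_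
      filter_upwards [ae_restrict_mem measurableSet_Ioi] with x' hx'
      have hx'0 : (0:ℝ) < x' := hx'
      have hmin : (0:ℝ) < min ρ x' := lt_min hρ hx'0
      have e1pos := Real.exp_pos (-(1/μ1) * ρ)
      have e1le : Real.exp (-(1/μ1) * ρ) ≤ 1 :=
        Real.exp_le_one_iff.mpr (by nlinarith [mul_pos ha1 hρ])
      have e2pos := Real.exp_pos (-(1/μ1) * min ρ x')
      have e2le : Real.exp (-(1/μ1) * min ρ x') ≤ 1 :=
        Real.exp_le_one_iff.mpr (by nlinarith [mul_pos ha1 hmin])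
      have hA : |Real.exp (-(1/μ1) * ρ) + 1 - Real.exp (-(1/μ1) * min ρ x')| ≤ 2 := by
        rw [abs_le]; constructor <;> nlinarith
      have hexp2 := (Real.exp_pos (-(1/μ2) * x')).le
      rw [Real.norm_eq_abs, abs_mul, abs_mul]
      refine mul_le_mul hA ?_ (by positivity) (by norm_num)
      rw [abs_of_pos (Real.exp_pos _)]
      refine mul_le_mul_of_nonneg_right ?_ hexp2
      calc |x' + y| ≤ |x'| + |y| := abs_add_le _ _
        _ = x' + |y| := by rw [abs_of_pos hx'0]
    have hpt : ∀ x' ∈ Set.Ioc (0:ℝ) ρ,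
        (Real.exp (-(1/μ1) * ρ) + 1 - Real.exp (-(1/μ1) * min ρ x')) *
          ((x' + y) * Real.exp (-(1/μ2) * x'))
        = (Real.exp (-(1/μ1) * ρ) + 1) * ((x' + y) * Real.exp (-(1/μ2) * x'))
            - (x' + y) * Real.exp (-(1/μ1 + 1/μ2) * x') := by
      intro x' hm
      rw [min_eq_right hm.2, show -(1/μ1 + 1/μ2) * x' = -(1/μ1) * x' + -(1/μ2) * x' by ring,
        Real.exp_add]
      ring
    have hpt2 : ∀ x' ∈ Set.Ioi ρ,
        (Real.exp (-(1/μ1) * ρ) + 1 - Real.exp (-(1/μ1) * min ρ x')) *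
          ((x' + y) * Real.exp (-(1/μ2) * x'))
        = (x' + y) * Real.exp (-(1/μ2) * x') := by
      intro x' hm
      rw [min_eq_left (le_of_lt hm)]
      ring
    rw [FB.split' hρ.le intf, setIntegral_congr_fun measurableSet_Ioc hpt,
      setIntegral_congr_fun measurableSet_Ioi hpt2,
      MeasureTheory.integral_sub
        (((FB.intlin ha2 y le_rfl).mono_set Set.Ioc_subset_Ioi_self).const_mul
          (Real.exp (-(1/μ1) * ρ) + 1))
        ((FB.intlin hab y le_rfl).mono_set Set.Ioc_subset_Ioi_self),
      MeasureTheory.integral_const_mul,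
      FB.linexp_Ioc ha2 y hρ.le, FB.linexp_Ioc hab y hρ.le, FB.linexp_Ioi ha2 y hρ.le]
    field_simp
    ring
  simp only [h4]
  rw [FB.affine_Ioi ha3]
  rw [show -ρ * (μ1 + μ2) / (μ1 * μ2) = -ρ/μ1 + -ρ/μ2 by
      field_simp
      ring]
  rw [Real.exp_add]
  rw [show -(1/μ1) * ρ = -ρ/μ1 by ring, show -(1/μ2) * ρ = -ρ/μ2 by ring,
    show -(1/μ1 + 1/μ2) * ρ = -ρ/μ1 + -ρ/μ2 by ring, Real.exp_add]
  field_simp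
  ring
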